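/- Let K be a field, α, λ ∈ K∖{0} and μ ∈ K. Suppose Q ∈ K[x,y,z] is homogeneous of degree 4, irreducible over the algebraic closure of K, and satisfies: (i) Q(x+α, y, 1) ∈ (x,y)³ in K[x,y]; (ii) Q(1,0,0) = 0 and the homogeneous degree-1 part of Q(1,y,z) ∈ K[y,z] is a nonzero scalar multiple of z; (iii) Q(0,y,z) = c·z⁴ for some c ∈ K∖{0}; (iv) y⁴ divides Q(x·y⁴, 1, y) in K[x,y] and the quotient h(x,y) = Q(x·y⁴, 1, y)/y⁴ satisfies h(λ,0) = 0; (v) y divides h(x·y+λ, y) in K[x,y] and the quotient h(x·y+λ, y)/y vanishes at (μ, 0). Then Q is a nonzero scalar multiple of G_α = λ²·z·(αz−x)³ + α²·x·y²·(μ·(αz−x) − α·λ·y). -/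

import Mathlib

/-!  Formalization of a statement from "Two kinds of examples of curves with
isomorphic complements" (J. Blanc).  `Gq K θ l m` is the homogeneous quartic
`G_θ = λ²·z·(θz−x)³ + θ²·x·y²·(μ·(θz−x) − θ·λ·y)` in `K[x,y,z]`, where the
variables `x, y, z` are `X 0, X 1, X 2` and `l = λ`, `m = μ`. -/

open MvPolynomial

noncomputable section

/-- The quartic `G_θ = λ²·z·(θz−x)³ + θ²·x·y²·(μ·(θz−x) − θ·λ·y)`. -/
def Gq (K : Type) [Field K] (t l m : K) : MvPolynomial (Fin 3) K :=
  C (l ^ 2) * X 2 * (C t * X 2 - X 0) ^ 3 +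
    C (t ^ 2) * X 0 * (X 1) ^ 2 * (C m * (C t * X 2 - X 0) - C (t * l) * X 1)

/- ### Auxiliary machinery -/

/-- The exponent vector `(i, j, k)` for `Fin 3`. -/
def Eaux (i j k : ℕ) : Fin 3 →₀ ℕ :=
  Finsupp.single 0 i + Finsupp.single 1 j + Finsupp.single 2 k

lemma Eaux_apply (i j k : ℕ) : Eaux i j k 0 = i ∧ Eaux i j k 1 = j ∧ Eaux i j k 2 = k := by
  simp [Eaux, Finsupp.single_apply]

@[simp] lemma Eaux_inj {i j k i' j' k' : ℕ} :
    Eaux i j k = Eaux i' j' k' ↔ i = i' ∧ j = j' ∧ k = k' := by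
  constructor
  · intro h
    obtain ⟨a0, a1, a2⟩ := Eaux_apply i j k
    obtain ⟨b0, b1, b2⟩ := Eaux_apply i' j' k'
    exact ⟨by rw [← a0, ← b0, h], by rw [← a1, ← b1, h], by rw [← a2, ← b2, h]⟩
  · rintro ⟨rfl, rfl, rfl⟩; rfl

lemma deg3 (d : Fin 3 →₀ ℕ) : d.degree = d 0 + d 1 + d 2 := by
  rw [Finsupp.degree_apply]
  rw [Finset.sum_subset (Finset.subset_univ _) (by intro x _ hx; simpa using hx)]
  simp [Fin.sum_univ_three]

/-- The exponent vector `(i, j)` for `Fin 2`. -/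
def Daux (i j : ℕ) : Fin 2 →₀ ℕ := Finsupp.single 0 i + Finsupp.single 1 j

lemma Daux_apply (i j : ℕ) : Daux i j 0 = i ∧ Daux i j 1 = j := by
  simp [Daux, Finsupp.single_apply]

lemma Daux_inj {i j i' j' : ℕ} : Daux i j = Daux i' j' ↔ i = i' ∧ j = j' := by
  constructor
  · intro h
    obtain ⟨a0, a1⟩ := Daux_apply i j
    obtain ⟨b0, b1⟩ := Daux_apply i' j'
    exact ⟨by rw [← a0, ← b0, h], by rw [← a1, ← b1, h]⟩
  · rintro ⟨rfl, rfl⟩; rfl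

lemma deg2 (d : Fin 2 →₀ ℕ) : d.degree = d 0 + d 1 := by
  rw [Finsupp.degree_apply]
  rw [Finset.sum_subset (Finset.subset_univ _) (by intro x _ hx; simpa using hx)]
  simp [Fin.sum_univ_two]

lemma degDaux (i j : ℕ) : (Daux i j).degree = i + j := by
  obtain ⟨a0, a1⟩ := Daux_apply i j
  rw [deg2, a0, a1]

variable {K : Type} [Field K]

lemma coeffD (r : K) (i j i' j' : ℕ) :
    coeff (Daux i j) (C r * (X 0 : MvPolynomial (Fin 2) K) ^ i' * X 1 ^ j')
      = if i' = i ∧ j' = j then r else 0 := by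
  have key : (C r * (X 0 : MvPolynomial (Fin 2) K) ^ i' * X 1 ^ j')
      = monomial (Daux i' j') r := by
    rw [Daux]
    simp [X, monomial_pow, monomial_mul, C_mul_monomial, Finsupp.smul_single, mul_assoc]
  by_cases hc : i' = i ∧ j' = j
  · obtain ⟨rfl, rfl⟩ := hc; simp [key, coeff_monomial]
  · rw [key, coeff_monomial, if_neg (fun hh => hc (Daux_inj.mp hh)), if_neg hc]

/-- The ideal of polynomials all of whose monomials have degree `≥ n`. -/
def lowIdeal (K : Type) [Field K] (n : ℕ) : Ideal (MvPolynomial (Fin 2) K) where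
  carrier := {p | ∀ d : Fin 2 →₀ ℕ, d.degree < n → coeff d p = 0}
  add_mem' := by
    intro p q hp hq d hd
    rw [coeff_add, hp d hd, hq d hd, add_zero]
  zero_mem' := by intro d hd; simp
  smul_mem' := by
    intro c p hp d hd
    rw [smul_eq_mul, coeff_mul]
    apply Finset.sum_eq_zero
    rintro ⟨e, f⟩ hef
    rw [Finset.HasAntidiagonal.mem_antidiagonal] at hef
    have h0 : e 0 + f 0 = d 0 := by rw [← hef]; simp
    have h1 : e 1 + f 1 = d 1 := by rw [← hef]; simp
    have hf : f.degree ≤ d.degree := by rw [deg2 f, deg2 d]; omega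
    rw [hp f (lt_of_le_of_lt hf hd), mul_zero]

lemma lowIdeal_mul (mn n : ℕ) :
    lowIdeal K mn * lowIdeal K n ≤ lowIdeal K (mn + n) := by
  rw [Ideal.mul_le]
  intro p hp q hq d hd
  rw [coeff_mul]
  apply Finset.sum_eq_zero
  rintro ⟨e, f⟩ hef
  rw [Finset.HasAntidiagonal.mem_antidiagonal] at hef
  have h0 : e 0 + f 0 = d 0 := by rw [← hef]; simp
  have h1 : e 1 + f 1 = d 1 := by rw [← hef]; simp
  have hdeg : e.degree + f.degree = d.degree := by rw [deg2 e, deg2 f, deg2 d]; omega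
  by_cases he : e.degree < mn
  · rw [hp e he, zero_mul]
  · rw [hq f (by omega), mul_zero]

lemma span_le_lowIdeal :
    Ideal.span {(X 0 : MvPolynomial (Fin 2) K), X 1} ≤ lowIdeal K 1 := by
  rw [Ideal.span_le]
  rintro p (rfl | rfl) <;>
  · intro d hd
    rw [coeff_X']
    rw [if_neg]
    rintro rfl
    rw [deg2] at hd
    simp [Finsupp.single_apply] at hd

lemma low_coeff_zero (p : MvPolynomial (Fin 2) K)
    (hp : p ∈ (Ideal.span {(X 0 : MvPolynomial (Fin 2) K), X 1}) ^ 3)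
    (d : Fin 2 →₀ ℕ) (hd : d.degree < 3) : coeff d p = 0 := by
  have step : (Ideal.span {(X 0 : MvPolynomial (Fin 2) K), X 1}) ^ 3 ≤ lowIdeal K 3 := by
    have h1 : Ideal.span {(X 0 : MvPolynomial (Fin 2) K), X 1} ≤ lowIdeal K 1 :=
      span_le_lowIdeal
    calc (Ideal.span {(X 0 : MvPolynomial (Fin 2) K), X 1}) ^ 3
        ≤ (lowIdeal K 1) ^ 3 := Ideal.pow_right_mono h1 3
      _ = (lowIdeal K 1) ^ 2 * lowIdeal K 1 := by ring
      _ = lowIdeal K 1 * lowIdeal K 1 * lowIdeal K 1 := by rw [sq]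
      _ ≤ lowIdeal K 2 * lowIdeal K 1 :=
          Ideal.mul_mono_left (lowIdeal_mul 1 1)
      _ ≤ lowIdeal K 3 := lowIdeal_mul 2 1
  exact step hp d hd

set_option maxHeartbeats 1000000 in
/-- Every homogeneous quartic in three variables is the sum of its 15 monomials. -/
lemma expand4 (Q : MvPolynomial (Fin 3) K) (hhom : Q.IsHomogeneous 4) :
    Q = C (coeff (Eaux 4 0 0) Q) * X 0 ^ 4 + C (coeff (Eaux 3 1 0) Q) * X 0 ^ 3 * X 1
      + C (coeff (Eaux 3 0 1) Q) * X 0 ^ 3 * X 2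
      + C (coeff (Eaux 2 2 0) Q) * X 0 ^ 2 * X 1 ^ 2
      + C (coeff (Eaux 2 1 1) Q) * X 0 ^ 2 * X 1 * X 2
      + C (coeff (Eaux 2 0 2) Q) * X 0 ^ 2 * X 2 ^ 2
      + C (coeff (Eaux 1 3 0) Q) * X 0 * X 1 ^ 3
      + C (coeff (Eaux 1 2 1) Q) * X 0 * X 1 ^ 2 * X 2
      + C (coeff (Eaux 1 1 2) Q) * X 0 * X 1 * X 2 ^ 2
      + C (coeff (Eaux 1 0 3) Q) * X 0 * X 2 ^ 3
      + C (coeff (Eaux 0 4 0) Q) * X 1 ^ 4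
      + C (coeff (Eaux 0 3 1) Q) * X 1 ^ 3 * X 2
      + C (coeff (Eaux 0 2 2) Q) * X 1 ^ 2 * X 2 ^ 2
      + C (coeff (Eaux 0 1 3) Q) * X 1 * X 2 ^ 3
      + C (coeff (Eaux 0 0 4) Q) * X 2 ^ 4 := by
  have key : ∀ i j k : ℕ, (C (coeff (Eaux i j k) Q) * X 0 ^ i * X 1 ^ j * X 2 ^ k
      : MvPolynomial (Fin 3) K) = monomial (Eaux i j k) (coeff (Eaux i j k) Q) := by
    intro i j k
    rw [Eaux]
    simp [X, monomial_pow, monomial_mul, C_mul_monomial, Finsupp.smul_single, mul_assoc]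
  rw [show (C (coeff (Eaux 2 1 1) Q) * X 0 ^ 2 * X 1 * X 2 : MvPolynomial (Fin 3) K)
      = C (coeff (Eaux 2 1 1) Q) * X 0 ^ 2 * X 1 ^ 1 * X 2 ^ 1 by ring,
    show (C (coeff (Eaux 3 1 0) Q) * X 0 ^ 3 * X 1 : MvPolynomial (Fin 3) K)
      = C (coeff (Eaux 3 1 0) Q) * X 0 ^ 3 * X 1 ^ 1 * X 2 ^ 0 by ring,
    show (C (coeff (Eaux 3 0 1) Q) * X 0 ^ 3 * X 2 : MvPolynomial (Fin 3) K)
      = C (coeff (Eaux 3 0 1) Q) * X 0 ^ 3 * X 1 ^ 0 * X 2 ^ 1 by ring,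
    show (C (coeff (Eaux 4 0 0) Q) * X 0 ^ 4 : MvPolynomial (Fin 3) K)
      = C (coeff (Eaux 4 0 0) Q) * X 0 ^ 4 * X 1 ^ 0 * X 2 ^ 0 by ring,
    show (C (coeff (Eaux 2 2 0) Q) * X 0 ^ 2 * X 1 ^ 2 : MvPolynomial (Fin 3) K)
      = C (coeff (Eaux 2 2 0) Q) * X 0 ^ 2 * X 1 ^ 2 * X 2 ^ 0 by ring,
    show (C (coeff (Eaux 2 0 2) Q) * X 0 ^ 2 * X 2 ^ 2 : MvPolynomial (Fin 3) K)
      = C (coeff (Eaux 2 0 2) Q) * X 0 ^ 2 * X 1 ^ 0 * X 2 ^ 2 by ring,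
    show (C (coeff (Eaux 1 3 0) Q) * X 0 * X 1 ^ 3 : MvPolynomial (Fin 3) K)
      = C (coeff (Eaux 1 3 0) Q) * X 0 ^ 1 * X 1 ^ 3 * X 2 ^ 0 by ring,
    show (C (coeff (Eaux 1 2 1) Q) * X 0 * X 1 ^ 2 * X 2 : MvPolynomial (Fin 3) K)
      = C (coeff (Eaux 1 2 1) Q) * X 0 ^ 1 * X 1 ^ 2 * X 2 ^ 1 by ring,
    show (C (coeff (Eaux 1 1 2) Q) * X 0 * X 1 * X 2 ^ 2 : MvPolynomial (Fin 3) K)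
      = C (coeff (Eaux 1 1 2) Q) * X 0 ^ 1 * X 1 ^ 1 * X 2 ^ 2 by ring,
    show (C (coeff (Eaux 1 0 3) Q) * X 0 * X 2 ^ 3 : MvPolynomial (Fin 3) K)
      = C (coeff (Eaux 1 0 3) Q) * X 0 ^ 1 * X 1 ^ 0 * X 2 ^ 3 by ring,
    show (C (coeff (Eaux 0 4 0) Q) * X 1 ^ 4 : MvPolynomial (Fin 3) K)
      = C (coeff (Eaux 0 4 0) Q) * X 0 ^ 0 * X 1 ^ 4 * X 2 ^ 0 by ring,
    show (C (coeff (Eaux 0 3 1) Q) * X 1 ^ 3 * X 2 : MvPolynomial (Fin 3) K)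
      = C (coeff (Eaux 0 3 1) Q) * X 0 ^ 0 * X 1 ^ 3 * X 2 ^ 1 by ring,
    show (C (coeff (Eaux 0 2 2) Q) * X 1 ^ 2 * X 2 ^ 2 : MvPolynomial (Fin 3) K)
      = C (coeff (Eaux 0 2 2) Q) * X 0 ^ 0 * X 1 ^ 2 * X 2 ^ 2 by ring,
    show (C (coeff (Eaux 0 1 3) Q) * X 1 * X 2 ^ 3 : MvPolynomial (Fin 3) K)
      = C (coeff (Eaux 0 1 3) Q) * X 0 ^ 0 * X 1 ^ 1 * X 2 ^ 3 by ring,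
    show (C (coeff (Eaux 0 0 4) Q) * X 2 ^ 4 : MvPolynomial (Fin 3) K)
      = C (coeff (Eaux 0 0 4) Q) * X 0 ^ 0 * X 1 ^ 0 * X 2 ^ 4 by ring]
  simp only [key]
  ext d
  simp only [coeff_add, coeff_monomial]
  by_cases h : d 0 + d 1 + d 2 = 4
  · have hd : d = Eaux (d 0) (d 1) (d 2) := by
      ext i; fin_cases i <;> simp [Eaux, Finsupp.single_apply]
    rw [hd]
    have h0 : d 0 ≤ 4 := by omega
    have h1 : d 1 ≤ 4 := by omega
    have h2 : d 2 ≤ 4 := by omega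
    interval_cases (d 0) <;> interval_cases (d 1) <;> interval_cases (d 2) <;>
      first | omega | norm_num [Eaux_inj]
  · rw [hhom.coeff_eq_zero (by rw [deg3]; exact h)]
    have hne : ∀ i j k : ℕ, i + j + k = 4 → ¬ (Eaux i j k = d) := by
      rintro i j k hs rfl
      exact h (by obtain ⟨e0, e1, e2⟩ := Eaux_apply i j k; rw [e0, e1, e2]; exact hs)
    rw [if_neg (hne 4 0 0 rfl), if_neg (hne 3 1 0 rfl), if_neg (hne 3 0 1 rfl),
      if_neg (hne 2 2 0 rfl), if_neg (hne 2 1 1 rfl), if_neg (hne 2 0 2 rfl),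
      if_neg (hne 1 3 0 rfl), if_neg (hne 1 2 1 rfl), if_neg (hne 1 1 2 rfl),
      if_neg (hne 1 0 3 rfl), if_neg (hne 0 4 0 rfl), if_neg (hne 0 3 1 rfl),
      if_neg (hne 0 2 2 rfl), if_neg (hne 0 1 3 rfl), if_neg (hne 0 0 4 rfl)]
    norm_num

set_option maxHeartbeats 4000000 in
/-- any quartic, irreducible over the algebraic closure, satisfying the five
geometric conditions (i)–(v) is a nonzero scalar multiple of `G_α` (Lemma 3.1 of the
paper: uniqueness of the curve of `Ω_α` through `q(λ)` and `r(λ,μ)`). -/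
theorem statement9 (K : Type) [Field K] (a l : K) (ha : a ≠ 0) (hl : l ≠ 0) (m : K)
    (Q : MvPolynomial (Fin 3) K)
    (hhom : Q.IsHomogeneous 4)
    (hirr : Irreducible (MvPolynomial.map (algebraMap K (AlgebraicClosure K)) Q))
    -- (i) multiplicity ≥ 3 at (α:0:1)
    (h1 : aeval ![(X 0 : MvPolynomial (Fin 2) K) + C a, X 1, 1] Q
        ∈ (Ideal.span {(X 0 : MvPolynomial (Fin 2) K), X 1}) ^ 3)
    -- (ii) passes through (1:0:0), tangent to z = 0
    (h2 : eval ![1, 0, 0] Q = 0)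
    (h2' : ∃ t : K, t ≠ 0 ∧
      homogeneousComponent 1 (aeval ![(1 : MvPolynomial (Fin 2) K), X 0, X 1] Q)
        = C t * X 1)
    -- (iii) meets x = 0 only at (0:1:0)
    (h3 : ∃ c : K, c ≠ 0 ∧
      aeval ![(0 : MvPolynomial (Fin 2) K), X 0, X 1] Q = C c * (X 1) ^ 4)
    -- (iv) and (v): passage through q(λ) and r(λ,μ)
    (h45 : ∃ h : MvPolynomial (Fin 2) K,
      aeval ![(X 0 : MvPolynomial (Fin 2) K) * (X 1) ^ 4, 1, X 1] Q = (X 1) ^ 4 * h ∧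
      eval ![l, 0] h = 0 ∧
      ∃ h₂ : MvPolynomial (Fin 2) K,
        aeval ![(X 0 : MvPolynomial (Fin 2) K) * X 1 + C l, X 1] h = X 1 * h₂ ∧
        eval ![m, 0] h₂ = 0) :
    ∃ c : K, c ≠ 0 ∧ Q = C c * Gq K a l m := by
  obtain ⟨q400, q310, q301, q220, q211, q202, q130, q121, q112, q103,
      q040, q031, q022, q013, q004, hQ⟩ :
      ∃ q400 q310 q301 q220 q211 q202 q130 q121 q112 q103 q040 q031 q022 q013 q004 : K,
        Q = C q400 * X 0 ^ 4 + C q310 * X 0 ^ 3 * X 1 + C q301 * X 0 ^ 3 * X 2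
          + C q220 * X 0 ^ 2 * X 1 ^ 2 + C q211 * X 0 ^ 2 * X 1 * X 2
          + C q202 * X 0 ^ 2 * X 2 ^ 2 + C q130 * X 0 * X 1 ^ 3
          + C q121 * X 0 * X 1 ^ 2 * X 2 + C q112 * X 0 * X 1 * X 2 ^ 2
          + C q103 * X 0 * X 2 ^ 3 + C q040 * X 1 ^ 4 + C q031 * X 1 ^ 3 * X 2
          + C q022 * X 1 ^ 2 * X 2 ^ 2 + C q013 * X 1 * X 2 ^ 3 + C q004 * X 2 ^ 4 :=
    ⟨_, _, _, _, _, _, _, _, _, _, _, _, _, _, _, expand4 Q hhom⟩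
  -- (ii) : q400 = 0
  rw [hQ] at h2
  simp at h2
  have z400 : q400 = 0 := h2
  -- (i): the six low-degree coefficients of Q(x+a, y, 1) vanish
  have hN1 : aeval ![(X 0 : MvPolynomial (Fin 2) K) + C a, X 1, 1] Q
      = C (q400*a^4 + q301*a^3 + q202*a^2 + q103*a + q004) * (X 0:MvPolynomial (Fin 2) K) ^ 0 * X 1 ^ 0
      + C (4*q400*a^3 + 3*q301*a^2 + 2*q202*a + q103) * X 0 ^ 1 * X 1 ^ 0
      + C (6*q400*a^2 + 3*q301*a + q202) * X 0 ^ 2 * X 1 ^ 0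
      + C (4*q400*a + q301) * X 0 ^ 3 * X 1 ^ 0
      + C q400 * X 0 ^ 4 * X 1 ^ 0
      + C (q310*a^3 + q211*a^2 + q112*a + q013) * X 0 ^ 0 * X 1 ^ 1
      + C (3*q310*a^2 + 2*q211*a + q112) * X 0 ^ 1 * X 1 ^ 1
      + C (3*q310*a + q211) * X 0 ^ 2 * X 1 ^ 1
      + C q310 * X 0 ^ 3 * X 1 ^ 1
      + C (q220*a^2 + q121*a + q022) * X 0 ^ 0 * X 1 ^ 2
      + C (2*q220*a + q121) * X 0 ^ 1 * X 1 ^ 2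
      + C q220 * X 0 ^ 2 * X 1 ^ 2
      + C (q130*a + q031) * X 0 ^ 0 * X 1 ^ 3
      + C q130 * X 0 ^ 1 * X 1 ^ 3
      + C q040 * X 0 ^ 0 * X 1 ^ 4 := by
    rw [hQ]
    simp only [map_add, map_mul, map_pow, map_one, map_ofNat, aeval_C, aeval_X,
      Matrix.cons_val_zero, Matrix.cons_val_one, Matrix.head_cons, Matrix.cons_val_two,
      Matrix.tail_cons, C_add, C_mul, C_pow, MvPolynomial.algebraMap_eq]
    ring
  rw [hN1] at h1
  have E1 := low_coeff_zero _ h1 (Daux 0 0) (by rw [degDaux]; norm_num)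
  have E2 := low_coeff_zero _ h1 (Daux 1 0) (by rw [degDaux]; norm_num)
  have E3 := low_coeff_zero _ h1 (Daux 0 1) (by rw [degDaux]; norm_num)
  have E4 := low_coeff_zero _ h1 (Daux 2 0) (by rw [degDaux]; norm_num)
  have E5 := low_coeff_zero _ h1 (Daux 1 1) (by rw [degDaux]; norm_num)
  have E6 := low_coeff_zero _ h1 (Daux 0 2) (by rw [degDaux]; norm_num)
  simp only [coeff_add, coeffD] at E1 E2 E3 E4 E5 E6
  norm_num at E1 E2 E3 E4 E5 E6
  have pE1 : q400*a^4 + q301*a^3 + q202*a^2 + q103*a + q004 = 0 := E1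
  have pE2 : 4*q400*a^3 + 3*q301*a^2 + 2*q202*a + q103 = 0 := E2
  have pE3 : q310*a^3 + q211*a^2 + q112*a + q013 = 0 := E3
  have pE4 : 6*q400*a^2 + 3*q301*a + q202 = 0 := E4
  have pE5 : 3*q310*a^2 + 2*q211*a + q112 = 0 := E5
  have pE6 : q220*a^2 + q121*a + q022 = 0 := E6
  -- (ii') : q310 = 0, q301 = t ≠ 0
  obtain ⟨t, ht, h2'⟩ := h2'
  have hN2 : aeval ![(1 : MvPolynomial (Fin 2) K), X 0, X 1] Q
      = C q400 * (X 0:MvPolynomial (Fin 2) K) ^ 0 * X 1 ^ 0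
      + C q310 * X 0 ^ 1 * X 1 ^ 0
      + C q301 * X 0 ^ 0 * X 1 ^ 1
      + C q220 * X 0 ^ 2 * X 1 ^ 0
      + C q211 * X 0 ^ 1 * X 1 ^ 1
      + C q202 * X 0 ^ 0 * X 1 ^ 2
      + C q130 * X 0 ^ 3 * X 1 ^ 0
      + C q121 * X 0 ^ 2 * X 1 ^ 1
      + C q112 * X 0 ^ 1 * X 1 ^ 2
      + C q103 * X 0 ^ 0 * X 1 ^ 3
      + C q040 * X 0 ^ 4 * X 1 ^ 0
      + C q031 * X 0 ^ 3 * X 1 ^ 1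
      + C q022 * X 0 ^ 2 * X 1 ^ 2
      + C q013 * X 0 ^ 1 * X 1 ^ 3
      + C q004 * X 0 ^ 0 * X 1 ^ 4 := by
    rw [hQ]
    simp only [map_add, map_mul, map_pow, map_one, map_ofNat, aeval_C, aeval_X,
      Matrix.cons_val_zero, Matrix.cons_val_one, Matrix.head_cons, Matrix.cons_val_two,
      Matrix.tail_cons, C_add, C_mul, C_pow, MvPolynomial.algebraMap_eq]
    ring
  rw [hN2] at h2'
  have hCX : (C t * X 1 : MvPolynomial (Fin 2) K) = C t * X 0 ^ 0 * X 1 ^ 1 := by ring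
  have G1 := congrArg (coeff (Daux 1 0)) h2'
  have G2 := congrArg (coeff (Daux 0 1)) h2'
  rw [coeff_homogeneousComponent, if_pos (by rw [degDaux]), hCX] at G1 G2
  simp only [coeff_add, coeffD] at G1 G2
  norm_num at G1 G2
  -- G1 : q310 = 0, G2 : q301 = t
  have z310 : q310 = 0 := G1
  have nz301 : q301 ≠ 0 := by rw [G2]; exact ht
  -- (iii) : q040 = q031 = q022 = q013 = 0
  obtain ⟨c0, hc0, h3⟩ := h3
  have hN3 : aeval ![(0 : MvPolynomial (Fin 2) K), X 0, X 1] Q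
      = C q040 * (X 0:MvPolynomial (Fin 2) K) ^ 4 * X 1 ^ 0
      + C q031 * X 0 ^ 3 * X 1 ^ 1
      + C q022 * X 0 ^ 2 * X 1 ^ 2
      + C q013 * X 0 ^ 1 * X 1 ^ 3
      + C q004 * X 0 ^ 0 * X 1 ^ 4 := by
    rw [hQ]
    simp only [map_add, map_mul, map_pow, map_one, map_ofNat, aeval_C, aeval_X,
      Matrix.cons_val_zero, Matrix.cons_val_one, Matrix.head_cons, Matrix.cons_val_two,
      Matrix.tail_cons, C_add, C_mul, C_pow, MvPolynomial.algebraMap_eq]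
    ring
  rw [hN3, show (C c0 * (X 1:MvPolynomial (Fin 2) K) ^ 4) = C c0 * X 0 ^ 0 * X 1 ^ 4 by ring] at h3
  have F1 := congrArg (coeff (Daux 4 0)) h3
  have F2 := congrArg (coeff (Daux 3 1)) h3
  have F3 := congrArg (coeff (Daux 2 2)) h3
  have F4 := congrArg (coeff (Daux 1 3)) h3
  simp only [coeff_add, coeffD] at F1 F2 F3 F4
  norm_num at F1 F2 F3 F4
  have z040 : q040 = 0 := F1
  have z031 : q031 = 0 := F2
  have z022 : q022 = 0 := F3
  have z013 : q013 = 0 := F4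
  -- consequences of (i)
  have zq211 : q211 = 0 := by
    have h' : q211 * a ^ 2 = 0 := by
      linear_combination -E3 + a*E5 - 2*a^3*z310 + z013
    exact (mul_eq_zero.mp h').resolve_right (pow_ne_zero 2 ha)
  have zq112 : q112 = 0 := by
    linear_combination E5 - 3*a^2*z310 - 2*a*zq211
  have v202 : q202 = -(3*a*q301) := by
    linear_combination E4 - 6*a^2*z400
  have v103 : q103 = 3*a^2*q301 := by
    linear_combination E2 - 4*a^3*z400 - 2*a*v202
  have v004 : q004 = -(a^3*q301) := by
    linear_combination E1 - a^4*z400 - a^2*v202 - a*v103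
  -- (iv) and (v)
  obtain ⟨h, hA, hl0, h₂, hh2, hm0⟩ := h45
  have hN4 : aeval ![(X 0 : MvPolynomial (Fin 2) K) * (X 1) ^ 4, 1, X 1] Q
      = (X 1 : MvPolynomial (Fin 2) K) ^ 4 *
        (C q400 * X 0 ^ 4 * X 1 ^ 12 + C q310 * X 0 ^ 3 * X 1 ^ 8
          + C q301 * X 0 ^ 3 * X 1 ^ 9 + C q220 * X 0 ^ 2 * X 1 ^ 4
          + C q211 * X 0 ^ 2 * X 1 ^ 5 + C q202 * X 0 ^ 2 * X 1 ^ 6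
          + C q130 * X 0 + C q121 * X 0 * X 1 + C q112 * X 0 * X 1 ^ 2
          + C q103 * X 0 * X 1 ^ 3 + C q004) := by
    rw [hQ, z040, z031, z022, z013]
    simp only [map_add, map_mul, map_pow, map_one, map_zero, map_ofNat, aeval_C, aeval_X,
      Matrix.cons_val_zero, Matrix.cons_val_one, Matrix.head_cons, Matrix.cons_val_two,
      Matrix.tail_cons, C_add, C_mul, C_pow, C_0, MvPolynomial.algebraMap_eq]
    ring
  have hX1 : (X 1 : MvPolynomial (Fin 2) K) ≠ 0 := X_ne_zero 1
  have hh : h = C q400 * X 0 ^ 4 * X 1 ^ 12 + C q310 * X 0 ^ 3 * X 1 ^ 8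
      + C q301 * X 0 ^ 3 * X 1 ^ 9 + C q220 * X 0 ^ 2 * X 1 ^ 4
      + C q211 * X 0 ^ 2 * X 1 ^ 5 + C q202 * X 0 ^ 2 * X 1 ^ 6
      + C q130 * X 0 + C q121 * X 0 * X 1 + C q112 * X 0 * X 1 ^ 2
      + C q103 * X 0 * X 1 ^ 3 + C q004 :=
    mul_left_cancel₀ (pow_ne_zero 4 hX1) (hA.symm.trans hN4)
  rw [hh] at hl0 hh2
  simp only [map_add, map_mul, map_pow, map_one, map_zero, map_ofNat, eval_C, eval_X,
    Matrix.cons_val_zero, Matrix.cons_val_one, Matrix.head_cons] at hl0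
  norm_num at hl0
  -- hl0 : q130 * l + q004 = 0 (in some shape)
  have eqL : q130 * l + q004 = 0 := by linear_combination hl0
  have eqLC : (C q130 * C l + C q004 : MvPolynomial (Fin 2) K) = 0 := by
    rw [← C_mul, ← C_add, eqL, C_0]
  have hN5 : aeval ![(X 0 : MvPolynomial (Fin 2) K) * X 1 + C l, X 1]
      (C q400 * (X 0:MvPolynomial (Fin 2) K) ^ 4 * X 1 ^ 12 + C q310 * X 0 ^ 3 * X 1 ^ 8
        + C q301 * X 0 ^ 3 * X 1 ^ 9 + C q220 * X 0 ^ 2 * X 1 ^ 4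
        + C q211 * X 0 ^ 2 * X 1 ^ 5 + C q202 * X 0 ^ 2 * X 1 ^ 6
        + C q130 * X 0 + C q121 * X 0 * X 1 + C q112 * X 0 * X 1 ^ 2
        + C q103 * X 0 * X 1 ^ 3 + C q004)
      = (X 1 : MvPolynomial (Fin 2) K) *
        (C q400 * (X 0 * X 1 + C l) ^ 4 * X 1 ^ 11 + C q310 * (X 0 * X 1 + C l) ^ 3 * X 1 ^ 7
          + C q301 * (X 0 * X 1 + C l) ^ 3 * X 1 ^ 8 + C q220 * (X 0 * X 1 + C l) ^ 2 * X 1 ^ 3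
          + C q211 * (X 0 * X 1 + C l) ^ 2 * X 1 ^ 4 + C q202 * (X 0 * X 1 + C l) ^ 2 * X 1 ^ 5
          + C q130 * X 0 + C q121 * (X 0 * X 1 + C l) + C q112 * (X 0 * X 1 + C l) * X 1
          + C q103 * (X 0 * X 1 + C l) * X 1 ^ 2) := by
    simp only [map_add, map_mul, map_pow, map_one, map_zero, map_ofNat, aeval_C, aeval_X,
      Matrix.cons_val_zero, Matrix.cons_val_one, Matrix.head_cons,
      MvPolynomial.algebraMap_eq]
    linear_combination eqLC
  have hh₂ : h₂ = C q400 * ((X 0:MvPolynomial (Fin 2) K) * X 1 + C l) ^ 4 * X 1 ^ 11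
      + C q310 * (X 0 * X 1 + C l) ^ 3 * X 1 ^ 7
      + C q301 * (X 0 * X 1 + C l) ^ 3 * X 1 ^ 8 + C q220 * (X 0 * X 1 + C l) ^ 2 * X 1 ^ 3
      + C q211 * (X 0 * X 1 + C l) ^ 2 * X 1 ^ 4 + C q202 * (X 0 * X 1 + C l) ^ 2 * X 1 ^ 5
      + C q130 * X 0 + C q121 * (X 0 * X 1 + C l) + C q112 * (X 0 * X 1 + C l) * X 1
      + C q103 * (X 0 * X 1 + C l) * X 1 ^ 2 :=
    mul_left_cancel₀ hX1 (hh2.symm.trans hN5)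
  rw [hh₂] at hm0
  simp only [map_add, map_mul, map_pow, map_one, map_zero, map_ofNat, eval_C, eval_X,
    Matrix.cons_val_zero, Matrix.cons_val_one, Matrix.head_cons] at hm0
  norm_num at hm0
  have eqM : q121 * l + q130 * m = 0 := by linear_combination hm0
  -- assemble
  refine ⟨-(q301 / l ^ 2), neg_ne_zero.mpr (div_ne_zero nz301 (pow_ne_zero 2 hl)), ?_⟩
  set c := -(q301 / l ^ 2) with hc
  have w301 : q301 = -(c * l ^ 2) := by rw [hc]; field_simp
  have w202 : q202 = 3 * c * l ^ 2 * a := by rw [v202, hc]; field_simp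
  have w103 : q103 = -(3 * c * l ^ 2 * a ^ 2) := by rw [v103, hc]; field_simp
  have w004 : q004 = c * l ^ 2 * a ^ 3 := by rw [v004, hc]; field_simp
  have w130 : q130 = -(c * l * a ^ 3) := by
    have h' : q130 * l = -(c * l ^ 2 * a ^ 3) := by linear_combination eqL - w004
    apply mul_right_cancel₀ hl
    linear_combination h'
  have w121 : q121 = c * a ^ 3 * m := by
    apply mul_right_cancel₀ hl
    linear_combination eqM - m * w130
  have w220 : q220 = -(c * a ^ 2 * m) := by
    apply mul_right_cancel₀ (pow_ne_zero 2 ha)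
    linear_combination E6 - z022 - a * w121
  rw [hQ, z400, z310, zq211, zq112, z040, z031, z022, z013, w301, w202, w103, w004,
    w130, w121, w220, Gq]
  simp only [C_add, C_mul, C_pow, C_neg, C_0, map_ofNat]
  ring







end
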